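/- Let β_b := (6/b³)·(Φ(√2·z_b)/√π − b·φ(z_b)) with z_b = Φ⁻¹(b). Then lim_{b→0⁺} β_b·b·z_b = −3; equivalently β_b ≈ −3/(b·z_b) as b → 0⁺, and in particular β_b·b → 0 as b → 0⁺. -/

import Mathlib

open Real MeasureTheory Filter
open Set

noncomputable def phi (z : ℝ) : ℝ := (Real.sqrt (2 * Real.pi))⁻¹ * Real.exp (-z ^ 2 / 2)

noncomputable def Phi (z : ℝ) : ℝ := ∫ s in Set.Iic z, phi s

lemma phi_pos (z : ℝ) : 0 < phi z := by
  apply mul_pos (inv_pos.2 (Real.sqrt_pos.2 (by positivity))) (Real.exp_pos _)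

lemma phi_cont : Continuous phi := by
  unfold phi; continuity

lemma phi_integrable : Integrable phi := by
  have h : Integrable (fun x : ℝ => Real.exp (-(1/2 : ℝ) * x ^ 2)) :=
    integrable_exp_neg_mul_sq (by norm_num)
  exact (h.const_mul ((Real.sqrt (2 * Real.pi))⁻¹)).congr
    (Filter.Eventually.of_forall fun x => by unfold phi; ring_nf)

lemma phi_tendsto_atBot : Tendsto phi atBot (nhds 0) := by
  have h1 : Tendsto (fun z : ℝ => -z ^ 2 / 2) atBot atBot := by
    apply Tendsto.atBot_div_const (by norm_num)
    apply tendsto_neg_atTop_atBot.comp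
    have : Tendsto (fun z : ℝ => (-z) ^ 2) atBot atTop :=
      (tendsto_pow_atTop (two_ne_zero)).comp tendsto_neg_atBot_atTop
    exact this.congr (fun z => by ring)
  have h2 := (Real.tendsto_exp_atBot).comp h1
  have := h2.const_mul ((Real.sqrt (2 * Real.pi))⁻¹)
  unfold phi
  simpa [mul_zero, Function.comp] using this

lemma hasDerivAt_phi (z : ℝ) : HasDerivAt phi (-z * phi z) z := by
  have h : HasDerivAt (fun z : ℝ => -z ^ 2 / 2) (-z) z := by
    have := ((hasDerivAt_pow 2 z).neg).div_const 2
    simpa using this.congr_deriv (by ring)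
  have := (h.exp).const_mul ((Real.sqrt (2 * Real.pi))⁻¹)
  unfold phi
  exact this.congr_deriv (by ring)

lemma hasDerivAt_Phi (z : ℝ) : HasDerivAt Phi (phi z) z := by
  have key : ∀ w : ℝ, Phi w = Phi 0 + ∫ s in (0:ℝ)..w, phi s := by
    intro w
    have := intervalIntegral.integral_Iic_sub_Iic (phi_integrable.integrableOn) (phi_integrable.integrableOn) (a := 0) (b := w)
    unfold Phi
    linarith [this]
  have h : HasDerivAt (fun w => Phi 0 + ∫ s in (0:ℝ)..w, phi s) (phi z) z := by
    apply HasDerivAt.const_add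
    exact intervalIntegral.integral_hasDerivAt_right
      (phi_integrable.intervalIntegrable)
      (phi_cont.stronglyMeasurableAtFilter _ _)
      (phi_cont.continuousAt)
  exact h.congr_of_eventuallyEq (Filter.Eventually.of_forall key) |>.congr_deriv rfl
-- continuation, appended to a.lean for testing
lemma id_mul_phi_integrable : Integrable (fun s : ℝ => s * phi s) := by
  have h : Integrable (fun x : ℝ => x * Real.exp (-(1/2 : ℝ) * x ^ 2)) :=
    integrable_mul_exp_neg_mul_sq (by norm_num)
  exact (h.const_mul ((Real.sqrt (2 * Real.pi))⁻¹)).congr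
    (Filter.Eventually.of_forall fun x => by unfold phi; ring_nf)

lemma neg_phi_tendsto : Tendsto (fun z => -phi z) atBot (nhds 0) := by
  simpa using phi_tendsto_atBot.neg

lemma integral_Iic_id_mul_phi (z : ℝ) : ∫ s in Iic z, s * phi s = -phi z := by
  have := MeasureTheory.integral_Iic_of_hasDerivAt_of_tendsto
    (f := fun s => -phi s) (f' := fun s => s * phi s) (a := z) (m := 0)
    ((phi_cont.neg).continuousWithinAt)
    (fun x _ => by exact (hasDerivAt_phi x).neg.congr_deriv (by ring))
    (id_mul_phi_integrable.integrableOn)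
    neg_phi_tendsto
  simpa using this

lemma Phi_nonneg (z : ℝ) : 0 ≤ Phi z :=
  setIntegral_nonneg measurableSet_Iic (fun s _ => (phi_pos s).le)

lemma Phi_crude (z : ℝ) (hz : z < 0) : Phi z ≤ phi z * (-z⁻¹) := by
  have h1 : Phi z ≤ ∫ s in Iic z, (s / z) * phi s := by
    apply setIntegral_mono_on (phi_integrable.integrableOn)
    · exact ((id_mul_phi_integrable.div_const z).congr
        (Filter.Eventually.of_forall fun x => by ring)).integrableOn
    · exact measurableSet_Iic
    · intro s hs
      have h2 : 1 ≤ s / z := by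
        rw [le_div_iff_of_neg hz]
        simpa using hs
      nlinarith [phi_pos s]
  have h2 : ∫ s in Iic z, (s / z) * phi s = -phi z / z := by
    have : ∫ s in Iic z, (s / z) * phi s = (∫ s in Iic z, s * phi s) / z := by
      rw [← integral_div]
      congr 1; ext s; ring
    rw [this, integral_Iic_id_mul_phi]
  rw [h2] at h1
  calc Phi z ≤ -phi z / z := h1
    _ = phi z * (-z⁻¹) := by field_simp
lemma inv_tendsto_atBot : Tendsto (fun z : ℝ => z⁻¹) atBot (nhds 0) := by
  have h : Tendsto (fun z : ℝ => -(-z)⁻¹) atBot (nhds (-0)) :=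
    Tendsto.neg (tendsto_inv_atTop_zero.comp tendsto_neg_atBot_atTop)
  rw [neg_zero] at h
  exact h.congr fun z => by rw [inv_neg, neg_neg]

lemma Phi_tendsto_atBot : Tendsto Phi atBot (nhds 0) := by
  apply tendsto_of_tendsto_of_tendsto_of_le_of_le' (g := fun _ : ℝ => (0:ℝ))
    (h := fun z : ℝ => phi z * (-z⁻¹)) tendsto_const_nhds
  · have h1 : Tendsto (fun z : ℝ => -z⁻¹) atBot (nhds 0) := by
      simpa using inv_tendsto_atBot.neg
    simpa using phi_tendsto_atBot.mul h1
  · exact Filter.Eventually.of_forall Phi_nonneg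
  · filter_upwards [Iic_mem_atBot (-1 : ℝ)] with z hz
    exact Phi_crude z (by simpa using lt_of_le_of_lt hz (by norm_num))

lemma Phi_mono : Monotone Phi := fun w z hwz => by
  apply setIntegral_mono_set (phi_integrable.integrableOn)
    (Filter.Eventually.of_forall fun s => (phi_pos s).le)
  exact HasSubset.Subset.eventuallyLE (Iic_subset_Iic.2 hwz)

/-- helper: if f' ≥ 0 on Iio 0 and f → 0 at -∞ then f ≥ 0 on Iio 0 -/
lemma nonneg_of_deriv_nonneg {f f' : ℝ → ℝ}
    (hd : ∀ z ∈ Iio (0:ℝ), HasDerivAt f (f' z) z)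
    (hpos : ∀ z ∈ Iio (0:ℝ), 0 ≤ f' z)
    (hlim : Tendsto f atBot (nhds 0)) : ∀ z ∈ Iio (0:ℝ), 0 ≤ f z := by
  intro z hz
  have hmono : MonotoneOn f (Iio 0) := by
    apply monotoneOn_of_deriv_nonneg (convex_Iio 0)
    · exact fun x hx => (hd x hx).continuousAt.continuousWithinAt
    · intro x hx
      rw [interior_Iio] at hx
      exact (hd x hx).differentiableAt.differentiableWithinAt
    · intro x hx
      rw [interior_Iio] at hx
      rw [(hd x hx).deriv]
      exact hpos x hx
  have h : ∀ᶠ w in atBot, f w ≤ f z := by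
    filter_upwards [Iic_mem_atBot z] with w hw
    rcases eq_or_lt_of_le (mem_Iic.mp hw) with rfl | hw'
    · rfl
    · exact hmono (lt_trans hw' hz) hz hw
  exact le_of_tendsto hlim h
lemma pol_tendsto (n : ℕ) : Tendsto (fun z : ℝ => z⁻¹ ^ n) atBot (nhds (0 ^ n)) :=
  inv_tendsto_atBot.pow n

lemma le_Phi_tail : ∀ z ∈ Iio (0:ℝ), phi z * (-z⁻¹ + z⁻¹ ^ 3) ≤ Phi z := by
  have key := nonneg_of_deriv_nonneg
    (f := fun z => Phi z - phi z * (-z⁻¹ + z⁻¹ ^ 3))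
    (f' := fun z => 3 * phi z * z⁻¹ ^ 4)
    (fun z hz => by
      have hz' : z ≠ 0 := ne_of_lt hz
      have hi := hasDerivAt_inv hz'
      have hpol : HasDerivAt (fun z : ℝ => -z⁻¹ + z⁻¹ ^ 3)
          (-(-(z^2)⁻¹) + (3:ℕ) * z⁻¹ ^ 2 * (-(z^2)⁻¹)) z := hi.neg.add (hi.pow 3)
      have h2 := (hasDerivAt_Phi z).sub ((hasDerivAt_phi z).mul hpol)
      refine h2.congr_deriv ?_
      field_simp
      ring)
    (fun z hz => mul_nonneg (mul_nonneg (by norm_num) (phi_pos z).le) (by positivity))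
    (by
      have h1 : Tendsto (fun z : ℝ => -z⁻¹ + z⁻¹ ^ 3) atBot (nhds (-0 + 0 ^ 3)) :=
        inv_tendsto_atBot.neg.add (pol_tendsto 3)
      norm_num at h1
      have := Phi_tendsto_atBot.sub (phi_tendsto_atBot.mul h1)
      norm_num at this
      exact this.congr fun x => by rw [inv_pow])
  intro z hz
  linarith [key z hz]

lemma Phi_tail_le : ∀ z ∈ Iio (0:ℝ), Phi z ≤ phi z * (-z⁻¹ + z⁻¹ ^ 3 - 3 * z⁻¹ ^ 5) := by
  have key := nonneg_of_deriv_nonneg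
    (f := fun z => phi z * (-z⁻¹ + z⁻¹ ^ 3 - 3 * z⁻¹ ^ 5) - Phi z)
    (f' := fun z => 15 * phi z * z⁻¹ ^ 6)
    (fun z hz => by
      have hz' : z ≠ 0 := ne_of_lt hz
      have hi := hasDerivAt_inv hz'
      have hpol : HasDerivAt (fun z : ℝ => -z⁻¹ + z⁻¹ ^ 3 - 3 * z⁻¹ ^ 5)
          (-(-(z^2)⁻¹) + (3:ℕ) * z⁻¹ ^ 2 * (-(z^2)⁻¹)
            - 3 * ((5:ℕ) * z⁻¹ ^ 4 * (-(z^2)⁻¹))) z :=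
        (hi.neg.add (hi.pow 3)).sub ((hi.pow 5).const_mul 3)
      have h2 := ((hasDerivAt_phi z).mul hpol).sub (hasDerivAt_Phi z)
      refine h2.congr_deriv ?_
      field_simp
      ring)
    (fun z hz => mul_nonneg (mul_nonneg (by norm_num) (phi_pos z).le) (by positivity))
    (by
      have h1 : Tendsto (fun z : ℝ => -z⁻¹ + z⁻¹ ^ 3 - 3 * z⁻¹ ^ 5) atBot
          (nhds (-0 + 0 ^ 3 - 3 * 0 ^ 5)) :=
        (inv_tendsto_atBot.neg.add (pol_tendsto 3)).sub ((pol_tendsto 5).const_mul 3)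
      norm_num at h1
      have := (phi_tendsto_atBot.mul h1).sub Phi_tendsto_atBot
      norm_num at this
      exact this.congr fun x => by rw [inv_pow, inv_pow])
  intro z hz
  linarith [key z hz]
lemma phi_sqrt_two (z : ℝ) :
    phi (Real.sqrt 2 * z) = Real.sqrt (2 * Real.pi) * (phi z) ^ 2 := by
  have hc : (0:ℝ) < Real.sqrt (2 * Real.pi) := Real.sqrt_pos.2 (by positivity)
  have h1 : (Real.sqrt 2 * z) ^ 2 = 2 * z ^ 2 := by
    rw [mul_pow, Real.sq_sqrt (by norm_num : (0:ℝ) ≤ 2)]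
  have h2 : Real.sqrt (2 * Real.pi) ^ 2 = 2 * Real.pi :=
    Real.sq_sqrt (by positivity)
  unfold phi
  rw [h1, mul_pow, ← Real.exp_nat_mul]
  rw [show -(2 * z ^ 2) / 2 = (2 : ℕ) * (-z ^ 2 / 2) by push_cast; ring]
  field_simp
lemma div_le_div_of_nonpos' {a b c : ℝ} (ha : a ≤ 0) (hb : 0 < b) (hbc : b ≤ c) :
    a / b ≤ a / c := by
  rw [div_le_div_iff₀ hb (lt_of_lt_of_le hb hbc)]
  exact mul_le_mul_of_nonpos_left hbc ha

lemma div_le_div_of_nonneg_right' {a b c : ℝ} (h : a ≤ b) (hc : 0 < c) : a / c ≤ b / c :=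
  (div_le_div_iff_of_pos_right hc).2 h

set_option maxHeartbeats 4000000 in
lemma F_bounds (z : ℝ) (hz : z ≤ -3) :
    (-3 - (9/2) * z⁻¹ ^ 2) / (1 - z⁻¹ ^ 2) ^ 2 ≤
      6 * z * (Phi (Real.sqrt 2 * z) / Real.sqrt Real.pi - Phi z * phi z) / (Phi z) ^ 2 ∧
    6 * z * (Phi (Real.sqrt 2 * z) / Real.sqrt Real.pi - Phi z * phi z) / (Phi z) ^ 2 ≤
      (-3 + 18 * z⁻¹ ^ 2) / (1 - z⁻¹ ^ 2 + 3 * z⁻¹ ^ 4) ^ 2 := by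
  have hz0 : z < 0 := by linarith
  have htz : (0:ℝ) < -z := by linarith
  set u : ℝ := (-z)⁻¹ with hu
  have hu0 : 0 < u := inv_pos.2 htz
  have hu3 : u ≤ 1/3 := by
    rw [hu]
    rw [show (1:ℝ)/3 = 3⁻¹ by norm_num]
    exact inv_anti₀ (by norm_num) (by linarith)
  have hzinv : z⁻¹ = -u := by rw [hu, inv_neg, neg_neg]
  have hz_eq : z = -u⁻¹ := by
    rw [hu, inv_inv]; ring
  have hp : 0 < phi z := phi_pos z
  set p := phi z with hpdef
  -- bounds on Phi z
  have hP1 : p * (u - u ^ 3) ≤ Phi z := by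
    have h := le_Phi_tail z hz0
    have e : -z⁻¹ + z⁻¹ ^ 3 = u - u ^ 3 := by rw [hzinv]; ring
    rw [e] at h; exact h
  have hP2 : Phi z ≤ p * (u - u ^ 3 + 3 * u ^ 5) := by
    have h := Phi_tail_le z hz0
    have e : -z⁻¹ + z⁻¹ ^ 3 - 3 * z⁻¹ ^ 5 = u - u ^ 3 + 3 * u ^ 5 := by rw [hzinv]; ring
    rw [e] at h; exact h
  -- bounds on Phi (√2 z) / √π
  set s : ℝ := Real.sqrt 2 with hs
  have hs0 : (0:ℝ) < s := Real.sqrt_pos.2 (by norm_num)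
  have hs2 : s ^ 2 = 2 := Real.sq_sqrt (by norm_num)
  have hsinv : s⁻¹ = s / 2 := by
    field_simp
    nlinarith [hs2]
  have hsz0 : s * z < 0 := mul_neg_of_pos_of_neg hs0 hz0
  have hSinv : (s * z)⁻¹ = -(s⁻¹ * u) := by rw [mul_inv, hzinv]; ring
  have hpi0 : (0:ℝ) < Real.sqrt Real.pi := Real.sqrt_pos.2 Real.pi_pos
  have hphis : phi (s * z) = s * Real.sqrt Real.pi * p ^ 2 := by
    rw [hs, phi_sqrt_two, Real.sqrt_mul (by norm_num : (0:ℝ) ≤ 2)]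
  have e1 : s * (s⁻¹ * u - (s⁻¹ * u) ^ 3) = u - u ^ 3 / 2 := by
    rw [hsinv]; linear_combination (u/2 - u^3/8*(s^2+2)) * hs2
  have e2 : s * (s⁻¹ * u - (s⁻¹ * u) ^ 3 + 3 * (s⁻¹ * u) ^ 5)
      = u - u ^ 3 / 2 + 3/4 * u ^ 5 := by
    rw [hsinv]
    linear_combination (u/2 - u^3/8*(s^2+2) + 3*u^5/32*(s^4 + 2*s^2 + 4)) * hs2
  have hA1 : p ^ 2 * (u - u ^ 3 / 2) ≤ Phi (s * z) / Real.sqrt Real.pi := by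
    rw [le_div_iff₀ hpi0]
    have h := le_Phi_tail (s * z) hsz0
    have e : -(s*z)⁻¹ + (s*z)⁻¹ ^ 3 = s⁻¹ * u - (s⁻¹ * u) ^ 3 := by rw [hSinv]; ring
    rw [e] at h
    calc p ^ 2 * (u - u ^ 3 / 2) * Real.sqrt Real.pi
        = phi (s * z) * (s⁻¹ * u - (s⁻¹ * u) ^ 3) := by rw [hphis, ← e1]; ring
      _ ≤ Phi (s * z) := h
  have hA2 : Phi (s * z) / Real.sqrt Real.pi ≤ p ^ 2 * (u - u ^ 3 / 2 + 3/4 * u ^ 5) := by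
    rw [div_le_iff₀ hpi0]
    have h := Phi_tail_le (s * z) hsz0
    have e : -(s*z)⁻¹ + (s*z)⁻¹ ^ 3 - 3 * (s*z)⁻¹ ^ 5
        = s⁻¹ * u - (s⁻¹ * u) ^ 3 + 3 * (s⁻¹ * u) ^ 5 := by rw [hSinv]; ring
    rw [e] at h
    calc Phi (s * z) ≤ phi (s*z) * (s⁻¹ * u - (s⁻¹ * u) ^ 3 + 3 * (s⁻¹ * u) ^ 5) := h
      _ = p ^ 2 * (u - u ^ 3 / 2 + 3/4 * u ^ 5) * Real.sqrt Real.pi := by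
          rw [hphis, ← e2]; ring
  -- difference D
  set A := Phi (s * z) / Real.sqrt Real.pi with hA
  set D := A - Phi z * p with hD
  have hD1 : p ^ 2 * (u ^ 3 / 2 - 3 * u ^ 5) ≤ D := by
    have := mul_le_mul_of_nonneg_right hP2 hp.le
    rw [hD]; nlinarith
  have hD2 : D ≤ p ^ 2 * (u ^ 3 / 2 + 3/4 * u ^ 5) := by
    have := mul_le_mul_of_nonneg_right hP1 hp.le
    rw [hD]; nlinarith
  -- positivity facts
  have h1u : (0:ℝ) < 1 - u ^ 2 := by nlinarith
  have hLpos : 0 < p * (u - u ^ 3) := by nlinarith [mul_pos hp (mul_pos hu0 h1u)]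
  have hPpos : 0 < Phi z := lt_of_lt_of_le hLpos hP1
  have hP2pos : 0 < (Phi z) ^ 2 := by positivity
  have hUpos : 0 < p * (u - u ^ 3 + 3 * u ^ 5) := by nlinarith
  have h9 : u ^ 2 ≤ 1/9 := by nlinarith
  have hkey0 : 0 ≤ u ^ 3 / 2 - 3 * u ^ 5 := by
    nlinarith [mul_le_mul_of_nonneg_left h9 (by positivity : (0:ℝ) ≤ 3 * u ^ 3),
      pow_pos hu0 3]
  have hDlo0 : 0 ≤ p ^ 2 * (u ^ 3 / 2 - 3 * u ^ 5) := mul_nonneg (by positivity) hkey0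
  have hden : (0:ℝ) < 1 - u ^ 2 + 3 * u ^ 4 := by nlinarith
  have hL2pos : 0 < (p * (u - u ^ 3)) ^ 2 := by positivity
  have hU2pos : 0 < (p * (u - u ^ 3 + 3 * u ^ 5)) ^ 2 := by positivity
  have hPL : (p * (u - u ^ 3)) ^ 2 ≤ (Phi z) ^ 2 := pow_le_pow_left₀ hLpos.le hP1 2
  have hPU : (Phi z) ^ 2 ≤ (p * (u - u ^ 3 + 3 * u ^ 5)) ^ 2 := pow_le_pow_left₀ hPpos.le hP2 2
  have hunz : u ≠ 0 := hu0.ne'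
  have hpnz : p ≠ 0 := hp.ne'
  clear_value u p s A D
  clear hu hpdef hs hA hD
  constructor
  · -- lower bound : glo ≤ F
    have n1 : 6 * z * (p ^ 2 * (u ^ 3 / 2 + 3/4 * u ^ 5)) ≤ 6 * z * D :=
      mul_le_mul_of_nonpos_left hD2 (by linarith : 6 * z ≤ 0)
    have n1nonpos : 6 * z * (p ^ 2 * (u ^ 3 / 2 + 3/4 * u ^ 5)) ≤ 0 :=
      mul_nonpos_iff.2 (Or.inr ⟨by linarith, mul_nonneg (by positivity) (by nlinarith)⟩)
    have step1 : 6 * z * (p ^ 2 * (u ^ 3 / 2 + 3/4 * u ^ 5)) / (Phi z) ^ 2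
        ≤ 6 * z * D / (Phi z) ^ 2 := by
      exact div_le_div_of_nonneg_right' n1 hP2pos
    have step2 : 6 * z * (p ^ 2 * (u ^ 3 / 2 + 3/4 * u ^ 5)) / (p * (u - u ^ 3)) ^ 2
        ≤ 6 * z * (p ^ 2 * (u ^ 3 / 2 + 3/4 * u ^ 5)) / (Phi z) ^ 2 := by
      exact div_le_div_of_nonpos' n1nonpos hL2pos hPL
    have eq1 : (-3 - (9/2) * z⁻¹ ^ 2) / (1 - z⁻¹ ^ 2) ^ 2
        = 6 * z * (p ^ 2 * (u ^ 3 / 2 + 3/4 * u ^ 5)) / (p * (u - u ^ 3)) ^ 2 := by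
      rw [hzinv, hz_eq]
      rw [div_eq_div_iff (by nlinarith : ((0:ℝ) < (1 - (-u) ^ 2) ^ 2)).ne' hL2pos.ne' ]
      field_simp
      ring
    rw [eq1]
    exact le_trans step2 step1
  · -- upper bound : F ≤ ghi
    have n1 : 6 * z * D ≤ 6 * z * (p ^ 2 * (u ^ 3 / 2 - 3 * u ^ 5)) :=
      mul_le_mul_of_nonpos_left hD1 (by linarith : 6 * z ≤ 0)
    have n1nonpos : 6 * z * (p ^ 2 * (u ^ 3 / 2 - 3 * u ^ 5)) ≤ 0 :=
      mul_nonpos_iff.2 (Or.inr ⟨by linarith, hDlo0⟩)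
    have step1 : 6 * z * D / (Phi z) ^ 2
        ≤ 6 * z * (p ^ 2 * (u ^ 3 / 2 - 3 * u ^ 5)) / (Phi z) ^ 2 :=
      div_le_div_of_nonneg_right' n1 hP2pos
    have step2 : 6 * z * (p ^ 2 * (u ^ 3 / 2 - 3 * u ^ 5)) / (Phi z) ^ 2
        ≤ 6 * z * (p ^ 2 * (u ^ 3 / 2 - 3 * u ^ 5)) / (p * (u - u ^ 3 + 3 * u ^ 5)) ^ 2 := by
      exact div_le_div_of_nonpos' n1nonpos hP2pos hPU
    have eq1 : (-3 + 18 * z⁻¹ ^ 2) / (1 - z⁻¹ ^ 2 + 3 * z⁻¹ ^ 4) ^ 2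
        = 6 * z * (p ^ 2 * (u ^ 3 / 2 - 3 * u ^ 5)) / (p * (u - u ^ 3 + 3 * u ^ 5)) ^ 2 := by
      rw [hzinv, hz_eq]
      rw [div_eq_div_iff (by nlinarith : ((0:ℝ) < (1 - (-u) ^ 2 + 3 * (-u) ^ 4) ^ 2)).ne' hU2pos.ne' ]
      field_simp
      ring
    rw [eq1]
    exact le_trans step1 step2
lemma Phi_pos_of_le {z : ℝ} (hz : z ≤ -3) : 0 < Phi z := by
  have hz0 : z < 0 := by linarith
  have hu0 : (0:ℝ) < (-z)⁻¹ := inv_pos.2 (by linarith)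
  have hu3 : (-z)⁻¹ ≤ 1/3 := by
    rw [show (1:ℝ)/3 = 3⁻¹ by norm_num]
    exact inv_anti₀ (by norm_num) (by linarith)
  have h := le_Phi_tail z hz0
  have hzinv : z⁻¹ = -(-z)⁻¹ := by rw [inv_neg, neg_neg]
  have hp := phi_pos z
  rw [hzinv] at h
  nlinarith [mul_pos hp (mul_pos hu0 (by nlinarith : (0:ℝ) < 1 - (-z)⁻¹ ^ 2))]

lemma F_tendsto : Tendsto (fun z : ℝ =>
    6 * z * (Phi (Real.sqrt 2 * z) / Real.sqrt Real.pi - Phi z * phi z) / (Phi z) ^ 2)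
    atBot (nhds (-3)) := by
  have hinv2 : Tendsto (fun z : ℝ => z⁻¹ ^ 2) atBot (nhds 0) := by
    simpa using (inv_tendsto_atBot.pow 2)
  have hglo : Tendsto (fun z : ℝ => (-3 - (9/2) * z⁻¹ ^ 2) / (1 - z⁻¹ ^ 2) ^ 2)
      atBot (nhds (-3)) := by
    have hc : ContinuousAt (fun v : ℝ => (-3 - (9/2) * v) / (1 - v) ^ 2) 0 := by
      apply ContinuousAt.div (by fun_prop) (by fun_prop)
      norm_num
    have := hc.tendsto.comp hinv2
    norm_num at this
    exact this.congr fun x => by simp [Function.comp, inv_pow]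
  have hghi : Tendsto (fun z : ℝ => (-3 + 18 * z⁻¹ ^ 2) / (1 - z⁻¹ ^ 2 + 3 * (z⁻¹ ^ 2) ^ 2) ^ 2)
      atBot (nhds (-3)) := by
    have hc : ContinuousAt (fun v : ℝ => (-3 + 18 * v) / (1 - v + 3 * v ^ 2) ^ 2) 0 := by
      apply ContinuousAt.div (by fun_prop) (by fun_prop)
      norm_num
    have := hc.tendsto.comp hinv2
    norm_num at this
    exact this.congr fun x => by simp [Function.comp, inv_pow]
  apply tendsto_of_tendsto_of_tendsto_of_le_of_le' hglo hghi
  · filter_upwards [Iic_mem_atBot (-3:ℝ)] with z hz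
    exact (F_bounds z hz).1
  · filter_upwards [Iic_mem_atBot (-3:ℝ)] with z hz
    have h := (F_bounds z hz).2
    calc 6 * z * (Phi (Real.sqrt 2 * z) / Real.sqrt Real.pi - Phi z * phi z) / Phi z ^ 2
        ≤ (-3 + 18 * z⁻¹ ^ 2) / (1 - z⁻¹ ^ 2 + 3 * z⁻¹ ^ 4) ^ 2 := h
      _ = (-3 + 18 * z⁻¹ ^ 2) / (1 - z⁻¹ ^ 2 + 3 * (z⁻¹ ^ 2) ^ 2) ^ 2 := by ring_nf
theorem singular_gradient_asymptotic (Φinv : ℝ → ℝ)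
    (hinv : ∀ y ∈ Set.Ioo (0 : ℝ) 1, Phi (Φinv y) = y) :
    Tendsto (fun b : ℝ =>
        ((6 / b ^ 3) * (Phi (Real.sqrt 2 * Φinv b) / Real.sqrt Real.pi - b * phi (Φinv b))) *
          b * Φinv b)
      (nhdsWithin 0 (Set.Ioi 0)) (nhds (-3)) ∧
    Tendsto (fun b : ℝ =>
        ((6 / b ^ 3) * (Phi (Real.sqrt 2 * Φinv b) / Real.sqrt Real.pi - b * phi (Φinv b))) * b)
      (nhdsWithin 0 (Set.Ioi 0)) (nhds 0) := by
  have htends : Tendsto Φinv (nhdsWithin 0 (Set.Ioi 0)) atBot := by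
    rw [tendsto_atBot]
    intro M
    set z₀ := min M (-3) with hz₀
    have hz₀le : z₀ ≤ -3 := min_le_right _ _
    have hpos : 0 < Phi z₀ := Phi_pos_of_le hz₀le
    have hsmall : Set.Ioo (0:ℝ) (min (Phi z₀) 1) ∈ nhdsWithin 0 (Set.Ioi 0) :=
      Ioo_mem_nhdsGT_of_mem ⟨le_refl 0, lt_min hpos one_pos⟩
    filter_upwards [hsmall] with y hy
    have hy1 : y ∈ Set.Ioo (0:ℝ) 1 := ⟨hy.1, lt_of_lt_of_le hy.2 (min_le_right _ _)⟩
    by_contra hcon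
    push_neg at hcon
    have h1 : z₀ < Φinv y := lt_of_le_of_lt (min_le_left _ _) hcon
    have h2 : Phi z₀ ≤ Phi (Φinv y) := Phi_mono h1.le
    rw [hinv y hy1] at h2
    have h3 : y < Phi z₀ := lt_of_lt_of_le hy.2 (min_le_left _ _)
    linarith
  have hmem : Set.Ioo (0:ℝ) 1 ∈ nhdsWithin 0 (Set.Ioi 0) :=
    Ioo_mem_nhdsGT_of_mem ⟨le_refl 0, one_pos⟩
  have hmain : Tendsto (fun b : ℝ =>
      ((6 / b ^ 3) * (Phi (Real.sqrt 2 * Φinv b) / Real.sqrt Real.pi - b * phi (Φinv b))) *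
        b * Φinv b) (nhdsWithin 0 (Set.Ioi 0)) (nhds (-3)) := by
    have hcomp := F_tendsto.comp htends
    apply hcomp.congr'
    filter_upwards [hmem] with y hy
    have hb := hinv y hy
    have hy0 : y ≠ 0 := ne_of_gt hy.1
    show 6 * Φinv y * (Phi (Real.sqrt 2 * Φinv y) / Real.sqrt Real.pi
        - Phi (Φinv y) * phi (Φinv y)) / (Phi (Φinv y)) ^ 2 = _
    rw [hb]
    field_simp
  refine ⟨hmain, ?_⟩
  have hinvz : Tendsto (fun y => (Φinv y)⁻¹) (nhdsWithin 0 (Set.Ioi 0)) (nhds 0) :=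
    inv_tendsto_atBot.comp htends
  have hprod := hmain.mul hinvz
  rw [mul_zero] at hprod
  apply hprod.congr'
  filter_upwards [htends.eventually (eventually_le_atBot (-1))] with y hy
  have hne : Φinv y ≠ 0 := by intro h; rw [h] at hy; linarith
  field_simp
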